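/- arXiv:1502.07870 — 3 statements merged into one kernel-verified Lean document; each statement's English description precedes it below -/
import Mathlib

section
/- Let x = x[1..n] be an indeterminate string and y = y[1..n] an integer array. Then y is the prefix table of x if and only if for each i ∈ 1..n both: (a) x[1..y[i]] ≈ x[i..i+y[i]−1] (position-wise matching), and (b) if i + y[i] ≤ n then x[y[i]+1] ≉ x[i+y[i]]. -/
/-- `x[i..i+ℓ-1]` matches the prefix `x[1..ℓ]` of `x[1..n]` position-wise.  -/
def MatchPref {α : Type*} (x : ℕ → Finset α) (n i ℓ : ℕ) : Prop :=
  i + ℓ ≤ n + 1 ∧ ∀ h, h < ℓ → ∃ a, a ∈ x (1 + h) ∧ a ∈ x (i + h)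

/-- `y` is the prefix table of the (1-indexed) string `x[1..n]`:
for each `i ∈ 1..n`, `y i` is the length of the longest prefix of `x[i..n]`
matching a prefix of `x`. -/
def IsPrefixTable {α : Type*} (x : ℕ → Finset α) (n : ℕ) (y : ℕ → ℕ) : Prop :=
  ∀ i, 1 ≤ i → i ≤ n → MatchPref x n i (y i) ∧ ∀ ℓ, MatchPref x n i ℓ → ℓ ≤ y i

/-- A feasible array `y[1..n]`. -/
def Feasible (y : ℕ → ℕ) (n : ℕ) : Prop :=
  y 1 = n ∧ ∀ i, 2 ≤ i → i ≤ n → y i ≤ n - i + 1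

/-- Positive edges of the prefix graph of `y[1..n]`. -/
def posEdges (y : ℕ → ℕ) (n : ℕ) : Finset (Sym2 ℕ) :=
  (Finset.Icc 2 n).biUnion fun i => (Finset.Icc 1 (y i)).image fun h => s(h, i + h - 1)

/-- Negative edges of the prefix graph of `y[1..n]`. -/
def negEdges (y : ℕ → ℕ) (n : ℕ) : Finset (Sym2 ℕ) :=
  ((Finset.Icc 2 n).filter fun i => i + y i ≤ n).image fun i => s(1 + y i, i + y i)

/-- The positive subgraph `P⁺` of the prefix graph of `y[1..n]`, as a simple graph. -/
def Pplus (y : ℕ → ℕ) (n : ℕ) : SimpleGraph ℕ where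
  Adj a b := a ≠ b ∧ s(a, b) ∈ posEdges y n
  symm := ⟨by
    rintro a b ⟨h1, h2⟩
    exact ⟨h1.symm, by rwa [Sym2.eq_swap]⟩⟩
  loopless := ⟨by rintro a ⟨h1, _⟩; exact h1 rfl⟩

/-- `y` is the prefix table of `x[1..n]` iff for every `i ∈ 1..n`:
(a) `x[1..y[i]] ≈ x[i..i+y[i]-1]` (in particular that substring fits in `x`), and
(b) if `i + y[i] ≤ n` then `x[y[i]+1] ≉ x[i+y[i]]`. -/
theorem prefixTable_iff {α : Type*} (n : ℕ) (x : ℕ → Finset α) (y : ℕ → ℕ)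
    (hne : ∀ i, 1 ≤ i → i ≤ n → (x i).Nonempty) :
    IsPrefixTable x n y ↔
      ∀ i, 1 ≤ i → i ≤ n →
        (i + y i ≤ n + 1 ∧ ∀ h, h < y i → ∃ a, a ∈ x (1 + h) ∧ a ∈ x (i + h)) ∧
        (i + y i ≤ n → ¬ ∃ a, a ∈ x (1 + y i) ∧ a ∈ x (i + y i)) := by
  constructor
  · intro H i h1 h2
    obtain ⟨⟨hle, hmat⟩, hmax⟩ := H i h1 h2
    refine ⟨⟨hle, hmat⟩, ?_⟩
    rintro hfit ⟨a, ha1, ha2⟩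
    have : MatchPref x n i (y i + 1) := by
      refine ⟨by omega, fun h hh => ?_⟩
      rcases Nat.lt_succ_iff_lt_or_eq.mp hh with h' | h'
      · exact hmat h h'
      · exact ⟨a, by rwa [h'], by rwa [h']⟩
    have := hmax _ this
    omega
  · intro H i h1 h2
    obtain ⟨⟨hle, hmat⟩, hneg⟩ := H i h1 h2
    refine ⟨⟨hle, hmat⟩, ?_⟩
    rintro ℓ ⟨hle', hmat'⟩
    by_contra hlt
    push_neg at hlt
    have hfit : i + y i ≤ n := by omega
    exact hneg hfit (hmat' (y i) (by omega))
end

section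
/- Let y be a feasible array with prefix graph P = (V, E⁺ ∪ E⁻). Then y is the prefix table of some regular string (a string in which every letter is a singleton subset of the alphabet) if and only if every negative edge of P joins two vertices lying in distinct connected components of the positive subgraph P⁺ = (V, E⁺). -/
lemma posEdge_letter_eq {α : Type} {n : ℕ} {y : ℕ → ℕ} (hy : Feasible y n)
    {x : ℕ → Finset α} (hcard : ∀ i, 1 ≤ i → i ≤ n → (x i).card = 1)
    (hpt : IsPrefixTable x n y) :
    ∀ a b, s(a, b) ∈ posEdges y n → x a = x b := by
  intro a b hab
  simp only [posEdges, Finset.mem_biUnion, Finset.mem_image, Finset.mem_Icc] at hab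
  obtain ⟨i, ⟨hi2, hin⟩, h, ⟨hh1, hhy⟩, heq⟩ := hab
  obtain ⟨h', rfl⟩ := Nat.exists_eq_add_of_le hh1
  have hiy : y i ≤ n - i + 1 := hy.2 i hi2 hin
  have key : x (1 + h') = x (i + h') := by
    obtain ⟨⟨hle, hmatch⟩, _⟩ := hpt i (by omega) hin
    obtain ⟨c, hc1, hc2⟩ := hmatch h' (by omega)
    obtain ⟨u, hu⟩ := Finset.card_eq_one.mp (hcard (1 + h') (by omega) (by omega))
    obtain ⟨v, hv⟩ := Finset.card_eq_one.mp (hcard (i + h') (by omega) (by omega))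
    rw [hu] at hc1 ⊢; rw [hv] at hc2 ⊢
    rw [Finset.mem_singleton] at hc1 hc2
    rw [← hc1, ← hc2]
  have harith : i + (1 + h') - 1 = i + h' := by omega
  rw [harith] at heq
  rw [Sym2.eq_iff] at heq
  rcases heq with ⟨rfl, rfl⟩ | ⟨rfl, rfl⟩
  · exact key
  · exact key.symm

lemma reach_letter_eq {α : Type} {n : ℕ} {y : ℕ → ℕ} (hy : Feasible y n)
    {x : ℕ → Finset α} (hcard : ∀ i, 1 ≤ i → i ≤ n → (x i).card = 1)
    (hpt : IsPrefixTable x n y) {a b : ℕ} (hr : (Pplus y n).Reachable a b) :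
    x a = x b := by
  obtain ⟨w⟩ := hr
  induction w with
  | nil => rfl
  | cons hadj p ih => exact (posEdge_letter_eq hy hcard hpt _ _ hadj.2).trans ih

/-- A feasible array `y` is the prefix table of some regular string (all letters
singletons) iff every negative edge of its prefix graph joins two vertices lying in
distinct connected components of the positive subgraph `P⁺`. -/
theorem regular_iff_negEdges_cross_components (n : ℕ) (y : ℕ → ℕ) (hy : Feasible y n) :
    (∃ (α : Type) (x : ℕ → Finset α),
      (∀ i, 1 ≤ i → i ≤ n → (x i).card = 1) ∧ IsPrefixTable x n y) ↔
    (∀ i, 2 ≤ i → i ≤ n → i + y i ≤ n →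
      ¬ (Pplus y n).Reachable (1 + y i) (i + y i)) := by
  constructor
  · rintro ⟨α, x, hcard, hpt⟩ i hi2 hin hineg hr
    have hxeq : x (1 + y i) = x (i + y i) := reach_letter_eq hy hcard hpt hr
    obtain ⟨⟨hle, hmatch⟩, hmax⟩ := hpt i (by omega) hin
    have : MatchPref x n i (y i + 1) := by
      refine ⟨by omega, fun h hh => ?_⟩
      rcases Nat.lt_or_ge h (y i) with hlt | hge
      · exact hmatch h hlt
      · have : h = y i := by omega
        subst this
        obtain ⟨u, hu⟩ := Finset.card_eq_one.mp (hcard (1 + y i) (by omega) (by omega))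
        exact ⟨u, by rw [hu]; exact Finset.mem_singleton_self u,
               by rw [← hxeq, hu]; exact Finset.mem_singleton_self u⟩
    have := hmax _ this
    omega
  · intro hneg
    refine ⟨(Pplus y n).ConnectedComponent,
      fun j => {(Pplus y n).connectedComponentMk j}, fun i _ _ => Finset.card_singleton _,
      fun i hi1 hin => ⟨⟨?_, fun h hh => ?_⟩, fun ℓ hℓ => ?_⟩⟩
    · by_cases hi : i = 1
      · subst hi; have := hy.1; omega
      · have := hy.2 i (by omega) hin; omega
    · refine ⟨(Pplus y n).connectedComponentMk (1 + h), Finset.mem_singleton_self _, ?_⟩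
      rw [Finset.mem_singleton]
      by_cases hi : i = 1
      · subst hi; rfl
      · apply SimpleGraph.ConnectedComponent.eq.mpr
        refine SimpleGraph.Adj.reachable ⟨by omega, ?_⟩
        simp only [posEdges, Finset.mem_biUnion, Finset.mem_image, Finset.mem_Icc]
        exact ⟨i, ⟨by omega, hin⟩, h + 1, ⟨by omega, by omega⟩,
          by rw [show i + (h + 1) - 1 = i + h from by omega, show h + 1 = 1 + h from by omega]⟩
    · obtain ⟨hle, hmatch⟩ := hℓ
      by_contra hlt
      push_neg at hlt
      by_cases hi : i = 1
      · subst hi; have := hy.1; omega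
      · have hyn : i + y i ≤ n := by omega
        refine hneg i (by omega) hin hyn ?_
        obtain ⟨a, ha1, ha2⟩ := hmatch (y i) (by omega)
        rw [Finset.mem_singleton] at ha1 ha2
        exact SimpleGraph.ConnectedComponent.eq.mp (ha1.symm.trans ha2)
end

section
/- If y is the prefix table of a regular string x, then for every positive edge (h,k) of the prefix graph of y, x[h] = x[k]; consequently all positions in the same connected component of P⁺ carry the same letter, and the endpoints of any negative edge lie in distinct components of P⁺. -/
lemma singl_eq {α : Type*} {s t : Finset α} (hs : s.card = 1) (ht : t.card = 1)
    {a : α} (has : a ∈ s) (hat : a ∈ t) : s = t := by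
  obtain ⟨b, rfl⟩ := Finset.card_eq_one.mp hs
  obtain ⟨c, rfl⟩ := Finset.card_eq_one.mp ht
  simp_all

/-- If `y` is the prefix table of a regular string `x`, then the endpoints of every
positive edge carry equal letters; hence all positions in one connected component of `P⁺`
carry the same letter, and the endpoints of every negative edge lie in distinct components. -/
theorem regular_posEdges_eq (n : ℕ) (hn : 1 ≤ n) {α : Type*} (x : ℕ → Finset α)
    (y : ℕ → ℕ) (hreg : ∀ i, 1 ≤ i → i ≤ n → (x i).card = 1)
    (hpt : IsPrefixTable x n y) :
    (∀ i h, 2 ≤ i → i ≤ n → 1 ≤ h → h ≤ y i → x h = x (i + h - 1)) ∧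
    (∀ a b, (Pplus y n).Reachable a b → x a = x b) ∧
    (∀ i, 2 ≤ i → i ≤ n → i + y i ≤ n →
      ¬ (Pplus y n).Reachable (1 + y i) (i + y i)) := by
  have key : ∀ i h, 2 ≤ i → i ≤ n → 1 ≤ h → h ≤ y i → x h = x (i + h - 1) := by
    intro i h h2 hin h1 hy
    obtain ⟨⟨hle, hm⟩, _⟩ := hpt i (by omega) hin
    obtain ⟨a, ha1, ha2⟩ := hm (h - 1) (by omega)
    rw [show 1 + (h - 1) = h by omega] at ha1
    rw [show i + (h - 1) = i + h - 1 by omega] at ha2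
    exact singl_eq (hreg h (by omega) (by omega)) (hreg (i + h - 1) (by omega) (by omega)) ha1 ha2
  have adj_eq : ∀ a b, (Pplus y n).Adj a b → x a = x b := by
    rintro a b ⟨hne, hmem⟩
    simp only [posEdges, Finset.mem_biUnion, Finset.mem_image, Finset.mem_Icc] at hmem
    obtain ⟨i, ⟨h2, hin⟩, h, ⟨h1, hy⟩, heq⟩ := hmem
    rw [Sym2.eq_iff] at heq
    rcases heq with ⟨ha, hb⟩ | ⟨ha, hb⟩
    · rw [← ha, ← hb]; exact key i h h2 hin h1 hy
    · rw [← ha, ← hb]; exact (key i h h2 hin h1 hy).symm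
  have reach_eq : ∀ a b, (Pplus y n).Reachable a b → x a = x b := by
    intro a b hr
    obtain ⟨w⟩ := hr
    induction w with
    | nil => rfl
    | cons hadj _ ih => exact (adj_eq _ _ hadj).trans ih
  refine ⟨key, reach_eq, ?_⟩
  intro i h2 hin hle hr
  have hxeq := reach_eq _ _ hr
  obtain ⟨⟨hle', hm⟩, hmax⟩ := hpt i (by omega) hin
  have : y i + 1 ≤ y i := by
    apply hmax
    refine ⟨by omega, ?_⟩
    intro h hh
    rcases Nat.lt_succ_iff_lt_or_eq.mp hh with hlt | rfl
    · exact hm h hlt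
    · obtain ⟨a, ha⟩ := Finset.card_eq_one.mp (hreg (1 + y i) (by omega) (by omega))
      exact ⟨a, by simp [ha], by rw [← hxeq, ha]; simp⟩
  omega
end
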